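/- arXiv:2012.13034 — 5 statements merged into one kernel-verified Lean document; each statement's English description precedes it below -/
import Mathlib

section
/- Let F: B(p₀,r) ⊂ ℝ^d → ℝ^d be a C² map. Suppose there exist 0 < R₁, R₂ < ∞ such that the Jacobian DF(p₀) is invertible with ‖(DF(p₀))⁻¹‖ ≤ R₁⁻¹, and all second-order partial derivatives of F satisfy |∂^α F(p)| ≤ R₂⁻¹ for every p ∈ B(p₀,r) and |α| = 2. Then there exists a constant c_d > 0 depending only on d such that F is injective on any ball B(p₀, r₀) with 0 < r₀ ≤ min(c_d R₁ R₂, r). -/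
open Metric

private lemma euclid_abs_apply_le_norm {d : ℕ} (u : EuclideanSpace ℝ (Fin d)) (i : Fin d) :
    |u i| ≤ ‖u‖ := by
  rw [EuclideanSpace.norm_eq, ← Real.sqrt_sq_eq_abs]
  apply Real.sqrt_le_sqrt
  calc (u i)^2 = ‖u i‖^2 := by rw [Real.norm_eq_abs, sq_abs]
  _ ≤ ∑ j, ‖u j‖^2 :=
    Finset.single_le_sum (f := fun j => ‖u j‖^2) (fun j _ => sq_nonneg _) (Finset.mem_univ i)

private lemma euclid_norm_le {d : ℕ} (x : EuclideanSpace ℝ (Fin d)) {a : ℝ} (ha : 0 ≤ a)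
    (h : ∀ k, |x k| ≤ a) : ‖x‖ ≤ Real.sqrt d * a := by
  rw [EuclideanSpace.norm_eq]
  have h1 : ∑ k, ‖x k‖^2 ≤ ∑ _k : Fin d, a^2 := by
    apply Finset.sum_le_sum
    intro k _
    rw [Real.norm_eq_abs]
    exact pow_le_pow_left₀ (abs_nonneg _) (h k) 2
  calc Real.sqrt (∑ k, ‖x k‖^2) ≤ Real.sqrt ((d : ℝ) * a^2) := by
        apply Real.sqrt_le_sqrt
        simpa using h1
  _ = Real.sqrt d * a := by
        rw [Real.sqrt_mul (Nat.cast_nonneg d), Real.sqrt_sq ha]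

private lemma euclid_decomp {d : ℕ} (u : EuclideanSpace ℝ (Fin d)) :
    ∑ i, u i • EuclideanSpace.single i (1:ℝ) = u := by
  simpa [EuclideanSpace.basisFun_apply, EuclideanSpace.basisFun_repr] using
    (EuclideanSpace.basisFun (Fin d) ℝ).sum_repr u

private lemma bilin_bound {d : ℕ}
    (T : EuclideanSpace ℝ (Fin d) →L[ℝ] EuclideanSpace ℝ (Fin d) →L[ℝ] EuclideanSpace ℝ (Fin d))
    {M : ℝ} (hM : 0 ≤ M)
    (h : ∀ i j k : Fin d, |T (EuclideanSpace.single i 1) (EuclideanSpace.single j 1) k| ≤ M) :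
    ‖T‖ ≤ ((d:ℝ)+1)^3 * M := by
  have hK : (0:ℝ) ≤ ((d:ℝ)+1)^3 * M := by positivity
  apply ContinuousLinearMap.opNorm_le_bound _ hK
  intro u
  apply ContinuousLinearMap.opNorm_le_bound _ (by positivity)
  intro v
  have hTe : ∀ i j : Fin d,
      ‖T (EuclideanSpace.single i 1) (EuclideanSpace.single j 1)‖ ≤ Real.sqrt d * M :=
    fun i j => euclid_norm_le _ hM (h i j)
  have expand : T u v = ∑ i, ∑ j, (u i * v j) •
      T (EuclideanSpace.single i 1) (EuclideanSpace.single j 1) := by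
    conv_lhs => rw [← euclid_decomp u, ← euclid_decomp v]
    simp only [map_sum, map_smul, ContinuousLinearMap.sum_apply,
      ContinuousLinearMap.smul_apply, Finset.smul_sum, smul_smul]
    rw [Finset.sum_comm]
    exact Finset.sum_congr rfl fun i _ => Finset.sum_congr rfl fun j _ => by rw [mul_comm]
  rw [expand]
  have step : ‖∑ i, ∑ j, (u i * v j) •
      T (EuclideanSpace.single i 1) (EuclideanSpace.single j 1)‖
      ≤ ∑ _i : Fin d, ∑ _j : Fin d, ‖u‖ * ‖v‖ * (Real.sqrt d * M) := by
    refine (norm_sum_le _ _).trans (Finset.sum_le_sum fun i _ => ?_)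
    refine (norm_sum_le _ _).trans (Finset.sum_le_sum fun j _ => ?_)
    rw [norm_smul, Real.norm_eq_abs, abs_mul]
    have h1 : |u i| * |v j| ≤ ‖u‖ * ‖v‖ :=
      mul_le_mul (euclid_abs_apply_le_norm u i) (euclid_abs_apply_le_norm v j)
        (abs_nonneg _) (norm_nonneg _)
    exact mul_le_mul h1 (hTe i j) (norm_nonneg _) (by positivity)
  refine step.trans ?_
  rw [Finset.sum_const, Finset.sum_const, Finset.card_univ, Fintype.card_fin, smul_smul,
    nsmul_eq_mul]
  have hs : Real.sqrt d ≤ (d:ℝ) + 1 := by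
    rw [show ((d:ℝ)+1) = Real.sqrt (((d:ℝ)+1)^2) by
      rw [Real.sqrt_sq (by positivity)]]
    apply Real.sqrt_le_sqrt
    nlinarith [Nat.cast_nonneg (α := ℝ) d]
  have hd : (0:ℝ) ≤ d := Nat.cast_nonneg d
  have hdd : (d:ℝ) * (d:ℝ) * Real.sqrt d ≤ ((d:ℝ)+1)^3 := by
    nlinarith [mul_le_mul_of_nonneg_left hs (mul_nonneg hd hd), Real.sqrt_nonneg (d:ℝ)]
  calc ((d*d : ℕ) : ℝ) * (‖u‖ * ‖v‖ * (Real.sqrt d * M))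
      = ((d:ℝ) * (d:ℝ) * Real.sqrt d) * M * ‖u‖ * ‖v‖ := by push_cast; ring
  _ ≤ ((d:ℝ)+1)^3 * M * ‖u‖ * ‖v‖ := by gcongr

theorem stmt_0 (d : ℕ) :
    ∃ c : ℝ, 0 < c ∧
      ∀ (F : EuclideanSpace ℝ (Fin d) → EuclideanSpace ℝ (Fin d))
        (p₀ : EuclideanSpace ℝ (Fin d)) (r R₁ R₂ : ℝ),
        0 < r → 0 < R₁ → 0 < R₂ →
        ContDiffOn ℝ 2 F (ball p₀ r) →
        (∃ L : EuclideanSpace ℝ (Fin d) ≃L[ℝ] EuclideanSpace ℝ (Fin d),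
          (L : EuclideanSpace ℝ (Fin d) →L[ℝ] EuclideanSpace ℝ (Fin d)) = fderiv ℝ F p₀ ∧
          ‖(L.symm : EuclideanSpace ℝ (Fin d) →L[ℝ] EuclideanSpace ℝ (Fin d))‖ ≤ R₁⁻¹) →
        (∀ p ∈ ball p₀ r, ∀ i j k : Fin d,
          |iteratedFDeriv ℝ 2 F p
            ![EuclideanSpace.single i 1, EuclideanSpace.single j 1] k| ≤ R₂⁻¹) →
        ∀ r₀ : ℝ, 0 < r₀ → r₀ ≤ min (c * R₁ * R₂) r →
          Set.InjOn F (ball p₀ r₀) := by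
  set Kd : ℝ := ((d:ℝ)+1)^3 with hKd
  have hKpos : 0 < Kd := by positivity
  refine ⟨(2*Kd)⁻¹, by positivity, ?_⟩
  rintro F p₀ r R₁ R₂ hr hR₁ hR₂ hF ⟨L, hL, hLs⟩ hsec r₀ hr₀ hr₀le
  have hr₀r : r₀ ≤ r := hr₀le.trans (min_le_right _ _)
  have hball : ball p₀ r₀ ⊆ ball p₀ r := ball_subset_ball hr₀r
  -- differentiability facts
  have hdF : ∀ p ∈ ball p₀ r, DifferentiableAt ℝ F p := fun p hp =>
    (hF.contDiffAt (isOpen_ball.mem_nhds hp)).differentiableAt two_ne_zero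
  have hdG : ∀ p ∈ ball p₀ r, HasFDerivAt (fderiv ℝ F) (fderiv ℝ (fderiv ℝ F) p) p := by
    intro p hp
    have h2 : ContDiffAt ℝ 2 F p := hF.contDiffAt (isOpen_ball.mem_nhds hp)
    have h1 : ContDiffAt ℝ 1 (fderiv ℝ F) p := h2.fderiv_right (by norm_num)
    exact (h1.differentiableAt one_ne_zero).hasFDerivAt
  -- bound on the second derivative
  have hGnorm : ∀ p ∈ ball p₀ r, ‖fderiv ℝ (fderiv ℝ F) p‖ ≤ Kd * R₂⁻¹ := by
    intro p hp
    apply bilin_bound _ (by positivity)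
    intro i j k
    have := hsec p hp i j k
    rwa [iteratedFDeriv_two_apply] at this
    -- may need simp for Matrix.cons_val
  -- Lipschitz bound for the first derivative on the small ball
  have key : ∀ x ∈ ball p₀ r₀, ‖fderiv ℝ F x - (L : EuclideanSpace ℝ (Fin d) →L[ℝ]
      EuclideanSpace ℝ (Fin d))‖ ≤ R₁ / 2 := by
    intro x hx
    have hmvt := (convex_ball p₀ r₀).norm_image_sub_le_of_norm_hasFDerivWithin_le
      (f := fderiv ℝ F) (f' := fun p => fderiv ℝ (fderiv ℝ F) p) (C := Kd * R₂⁻¹)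
      (fun p hp => (hdG p (hball hp)).hasFDerivWithinAt)
      (fun p hp => hGnorm p (hball hp)) (mem_ball_self hr₀) hx
    rw [hL]
    refine hmvt.trans ?_
    have hxd : ‖x - p₀‖ ≤ r₀ := by
      rw [← dist_eq_norm]
      exact (mem_ball.mp hx).le
    have h2 : Kd * R₂⁻¹ * ‖x - p₀‖ ≤ Kd * R₂⁻¹ * r₀ := by
      apply mul_le_mul_of_nonneg_left hxd (by positivity)
    refine h2.trans ?_
    have h3 : r₀ ≤ (2*Kd)⁻¹ * R₁ * R₂ := hr₀le.trans (min_le_left _ _)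
    have h4 : Kd * R₂⁻¹ * r₀ ≤ Kd * R₂⁻¹ * ((2*Kd)⁻¹ * R₁ * R₂) := by
      apply mul_le_mul_of_nonneg_left h3 (by positivity)
    refine h4.trans (le_of_eq ?_)
    field_simp
  -- ApproximatesLinearOn
  have happ : ApproximatesLinearOn F
      (L : EuclideanSpace ℝ (Fin d) →L[ℝ] EuclideanSpace ℝ (Fin d)) (ball p₀ r₀)
      ⟨R₁/2, (half_pos hR₁).le⟩ := by
    intro x hx y hy
    have hmvt := (convex_ball p₀ r₀).norm_image_sub_le_of_norm_hasFDerivWithin_le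
      (f := fun z => F z - L z)
      (f' := fun z => fderiv ℝ F z - (L : EuclideanSpace ℝ (Fin d) →L[ℝ]
        EuclideanSpace ℝ (Fin d)))
      (C := R₁/2)
      (fun z hz => ((hdF z (hball hz)).hasFDerivAt.sub
        (L : EuclideanSpace ℝ (Fin d) →L[ℝ] EuclideanSpace ℝ (Fin d)).hasFDerivAt).hasFDerivWithinAt)
      (fun z hz => key z hz) hy hx
    have : F x - L x - (F y - L y) = F x - F y -
        (L : EuclideanSpace ℝ (Fin d) →L[ℝ] EuclideanSpace ℝ (Fin d)) (x - y) := by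
      rw [map_sub]
      simp only [ContinuousLinearEquiv.coe_coe]
      abel
    rw [this] at hmvt
    exact hmvt
  -- conclude injectivity
  rcases subsingleton_or_nontrivial (EuclideanSpace ℝ (Fin d)) with hsub | hnt
  · exact happ.injOn (Or.inl hsub)
  · apply happ.injOn
    right
    have hLspos : 0 < ‖(L.symm : EuclideanSpace ℝ (Fin d) →L[ℝ] EuclideanSpace ℝ (Fin d))‖ := by
      rcases lt_or_eq_of_le (norm_nonneg
        (L.symm : EuclideanSpace ℝ (Fin d) →L[ℝ] EuclideanSpace ℝ (Fin d))) with h | h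
      · exact h
      · exfalso
        obtain ⟨x, hx⟩ := exists_ne (        0 : EuclideanSpace ℝ (Fin d))
        have h0 : (L.symm : EuclideanSpace ℝ (Fin d) →L[ℝ] EuclideanSpace ℝ (Fin d)) = 0 :=
          (ContinuousLinearMap.opNorm_zero_iff _).mp h.symm
        have : x = 0 := by
          have := L.symm_apply_apply x
          rw [← this]
          show (L.symm : EuclideanSpace ℝ (Fin d) →L[ℝ] EuclideanSpace ℝ (Fin d)) (L x) = 0
          rw [h0]
          rfl
        exact hx this
    refine NNReal.coe_lt_coe.mp ?_
    rw [NNReal.coe_inv]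
    have hNcoe : (‖(L.symm : EuclideanSpace ℝ (Fin d) →L[ℝ] EuclideanSpace ℝ (Fin d))‖₊ : ℝ)
        = ‖(L.symm : EuclideanSpace ℝ (Fin d) →L[ℝ] EuclideanSpace ℝ (Fin d))‖ := rfl
    rw [hNcoe]
    have : R₁ ≤ ‖(L.symm : EuclideanSpace ℝ (Fin d) →L[ℝ] EuclideanSpace ℝ (Fin d))‖⁻¹ := by
      rw [le_inv_comm₀ hR₁ hLspos]
      exact hLs
    calc (R₁/2 : ℝ) < R₁ := half_lt_self hR₁
    _ ≤ _ := this
end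

section
/- Let [[A,B],[C,D]] be a real symplectic (2d)×(2d) matrix in d×d blocks. Then the complex d×d matrices (A + iC)ᵀ and (B + iD)ᵀ are invertible. -/
open Matrix

private lemma aux_unit {d : ℕ} (M : Matrix (Fin d) (Fin d) ℝ)
    (h : ∀ x, M *ᵥ x = 0 → x = 0) : IsUnit M := by
  rw [Matrix.isUnit_iff_isUnit_det, isUnit_iff_ne_zero]
  intro hdet
  obtain ⟨v, hv, hv0⟩ := Matrix.exists_mulVec_eq_zero_iff.mpr hdet
  exact hv (h v hv0)

private lemma aux_dp_nonneg {d : ℕ} (v : Fin d → ℝ) : 0 ≤ v ⬝ᵥ v :=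
  Finset.sum_nonneg fun i _ => mul_self_nonneg (v i)

private lemma aux_key {d : ℕ} (X Y : Matrix (Fin d) (Fin d) ℝ)
    (hsym : Xᵀ * Y = Yᵀ * X)
    (hker : ∀ x, X *ᵥ x = 0 → Y *ᵥ x = 0 → x = 0) :
    IsUnit ((X.map Complex.ofReal + Complex.I • Y.map Complex.ofReal)ᵀ) := by
  set X' := X.map Complex.ofReal with hX'
  set Y' := Y.map Complex.ofReal with hY'
  -- the real Gram matrix is a unit
  have hR : IsUnit (Xᵀ * X + Yᵀ * Y) := by
    apply aux_unit
    intro x hx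
    have h0 : x ⬝ᵥ ((Xᵀ * X + Yᵀ * Y) *ᵥ x) = 0 := by rw [hx, dotProduct_zero]
    have hexp : x ⬝ᵥ ((Xᵀ * X + Yᵀ * Y) *ᵥ x)
        = (X *ᵥ x) ⬝ᵥ (X *ᵥ x) + (Y *ᵥ x) ⬝ᵥ (Y *ᵥ x) := by
      rw [add_mulVec, dotProduct_add, ← Matrix.mulVec_mulVec, ← Matrix.mulVec_mulVec]
      rw [dotProduct_mulVec x Xᵀ, dotProduct_mulVec x Yᵀ,
        Matrix.vecMul_transpose, Matrix.vecMul_transpose]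
    rw [hexp] at h0
    have hXx : (X *ᵥ x) ⬝ᵥ (X *ᵥ x) = 0 := by
      have := aux_dp_nonneg (X *ᵥ x); have := aux_dp_nonneg (Y *ᵥ x); linarith
    have hYx : (Y *ᵥ x) ⬝ᵥ (Y *ᵥ x) = 0 := by
      have := aux_dp_nonneg (X *ᵥ x); have := aux_dp_nonneg (Y *ᵥ x); linarith
    exact hker x (dotProduct_self_eq_zero.mp hXx) (dotProduct_self_eq_zero.mp hYx)
  -- the complexified Gram matrix is a unit
  have hRC : IsUnit ((Xᵀ * X + Yᵀ * Y).map Complex.ofReal) := by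
    have := hR.map (RingHom.mapMatrix (m := Fin d) Complex.ofRealHom)
    simp only [RingHom.mapMatrix_apply] at this
    exact this
  -- factorization
  have hfac : (X'ᵀ - Complex.I • Y'ᵀ) * (X' + Complex.I • Y')
      = (Xᵀ * X + Yᵀ * Y).map Complex.ofReal := by
    have hmul : ∀ M N : Matrix (Fin d) (Fin d) ℝ, (M * N).map Complex.ofReal
        = M.map Complex.ofReal * N.map Complex.ofReal := fun M N => by
      ext i j
      simp [Matrix.map_apply, Matrix.mul_apply]
    have hsym' : X'ᵀ * Y' = Y'ᵀ * X' := by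
      rw [hX', hY', ← Matrix.transpose_map, ← Matrix.transpose_map, ← hmul, ← hmul, hsym]
    have h1 : (X'ᵀ - Complex.I • Y'ᵀ) * (X' + Complex.I • Y')
        = X'ᵀ * X' + Y'ᵀ * Y' + Complex.I • (X'ᵀ * Y' - Y'ᵀ * X') := by
      simp only [sub_mul, mul_add, Matrix.smul_mul, Matrix.mul_smul, smul_smul,
        Complex.I_mul_I, neg_smul, one_smul, smul_sub]
      abel
    rw [h1, hsym', sub_self, smul_zero, add_zero,
      Matrix.map_add _ Complex.ofReal_add, hmul, hmul,
      hX', hY', Matrix.transpose_map, Matrix.transpose_map]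
  -- conclude
  rw [Matrix.isUnit_iff_isUnit_det, Matrix.det_transpose]
  have hdet : IsUnit ((X'ᵀ - Complex.I • Y'ᵀ).det * (X' + Complex.I • Y').det) := by
    rw [← Matrix.det_mul, hfac, ← Matrix.isUnit_iff_isUnit_det]
    exact hRC
  exact isUnit_of_mul_isUnit_right hdet

theorem stmt_6 (d : ℕ) (A B C D : Matrix (Fin d) (Fin d) ℝ)
    (h : (Matrix.fromBlocks A B C D)ᵀ * Matrix.fromBlocks 0 1 (-1) 0 *
        Matrix.fromBlocks A B C D = Matrix.fromBlocks 0 1 (-1) 0) :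
    IsUnit ((A.map Complex.ofReal + Complex.I • C.map Complex.ofReal)ᵀ) ∧
    IsUnit ((B.map Complex.ofReal + Complex.I • D.map Complex.ofReal)ᵀ) := by
  rw [Matrix.fromBlocks_transpose, Matrix.fromBlocks_multiply,
    Matrix.fromBlocks_multiply] at h
  have e11 := congrArg Matrix.toBlocks₁₁ h
  have e12 := congrArg Matrix.toBlocks₁₂ h
  have e22 := congrArg Matrix.toBlocks₂₂ h
  simp only [Matrix.toBlocks_fromBlocks₁₁, Matrix.toBlocks_fromBlocks₁₂,
    Matrix.toBlocks_fromBlocks₂₂, Matrix.mul_zero, Matrix.mul_one, Matrix.mul_neg,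
    Matrix.zero_mul, Matrix.one_mul, Matrix.neg_mul, zero_add, add_zero] at e11 e12 e22
  have hsymAC : Aᵀ * C = Cᵀ * A := by
    have : -(Cᵀ * A) + Aᵀ * C = 0 := by linear_combination (norm := abel) e11
    linear_combination (norm := abel) this
  have hsymBD : Bᵀ * D = Dᵀ * B := by
    have : -(Dᵀ * B) + Bᵀ * D = 0 := by linear_combination (norm := abel) e22
    linear_combination (norm := abel) this
  have hone : -(Cᵀ * B) + Aᵀ * D = 1 := by linear_combination (norm := abel) e12
  constructor
  · apply aux_key A C hsymAC
    intro x hAx hCx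
    have honeT : -(Bᵀ * C) + Dᵀ * A = 1 := by
      have := congrArg Matrix.transpose hone
      simpa [Matrix.transpose_add, Matrix.transpose_neg, Matrix.transpose_mul,
        add_comm] using this
    calc x = (-(Bᵀ * C) + Dᵀ * A) *ᵥ x := by rw [honeT, Matrix.one_mulVec]
    _ = -(Bᵀ *ᵥ (C *ᵥ x)) + Dᵀ *ᵥ (A *ᵥ x) := by
        rw [add_mulVec, Matrix.neg_mulVec, Matrix.mulVec_mulVec, Matrix.mulVec_mulVec]
    _ = 0 := by rw [hAx, hCx, Matrix.mulVec_zero, Matrix.mulVec_zero, neg_zero, add_zero]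
  · apply aux_key B D hsymBD
    intro x hBx hDx
    calc x = (-(Cᵀ * B) + Aᵀ * D) *ᵥ x := by rw [hone, Matrix.one_mulVec]
    _ = -(Cᵀ *ᵥ (B *ᵥ x)) + Aᵀ *ᵥ (D *ᵥ x) := by
        rw [add_mulVec, Matrix.neg_mulVec, Matrix.mulVec_mulVec, Matrix.mulVec_mulVec]
    _ = 0 := by rw [hBx, hDx, Matrix.mulVec_zero, Matrix.mulVec_zero, neg_zero, add_zero]
end

section
/- Let [[A,B],[C,D]] be a real symplectic matrix in d×d blocks, and let Γ := (B + iD)ᵀ (A + iC)^{−T}. Then Γ is symmetric (Γᵀ = Γ) and its imaginary part Im Γ is positive definite. -/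
open Matrix

/-- conjugation commutes with mulVec -/
lemma star_mulVec_map {n : Type*} [Fintype n] (M : Matrix n n ℂ) (v : n → ℂ) :
    star (M *ᵥ v) = (M.map (starRingEnd ℂ)) *ᵥ (star v) := by
  ext i
  simp [Matrix.mulVec, dotProduct, map_sum, Matrix.map_apply]

theorem stmt_7 (d : ℕ) (A B C D : Matrix (Fin d) (Fin d) ℝ)
    (h : (Matrix.fromBlocks A B C D)ᵀ * Matrix.fromBlocks 0 1 (-1) 0 *
        Matrix.fromBlocks A B C D = Matrix.fromBlocks 0 1 (-1) 0) :
    let Γ : Matrix (Fin d) (Fin d) ℂ :=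
      (B.map Complex.ofReal + Complex.I • D.map Complex.ofReal)ᵀ *
        ((A.map Complex.ofReal + Complex.I • C.map Complex.ofReal)ᵀ)⁻¹
    Γᵀ = Γ ∧ (Matrix.of fun i j => (Γ i j).im).PosDef := by
  intro Γ
  -- Step 1 : real block relations from symplecticity
  obtain ⟨e1, e2, e4⟩ : A * Bᵀ = B * Aᵀ ∧ A * Dᵀ - B * Cᵀ = 1 ∧ C * Dᵀ = D * Cᵀ := by
    set M := Matrix.fromBlocks A B C D with hMdef
    have hmem : Mᵀ ∈ Matrix.symplecticGroup (Fin d) ℝ := by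
      rw [SymplecticGroup.mem_iff, transpose_transpose]
      have h2 : Mᵀ * (-(J (Fin d) ℝ)) * M = -(J (Fin d) ℝ) := by
        have hJ : -(J (Fin d) ℝ) = Matrix.fromBlocks 0 1 (-1) 0 := by
          simp [Matrix.J, Matrix.fromBlocks_neg]
        rw [hJ]; exact h
      have := congrArg Neg.neg h2
      simpa [Matrix.mul_neg, Matrix.neg_mul] using this
    have hmem2 : M ∈ Matrix.symplecticGroup (Fin d) ℝ := by
      simpa [transpose_transpose] using SymplecticGroup.transpose_mem hmem
    rw [SymplecticGroup.mem_iff] at hmem2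
    rw [hMdef, Matrix.J, fromBlocks_transpose, fromBlocks_multiply, fromBlocks_multiply] at hmem2
    simp only [Matrix.mul_zero, Matrix.mul_one, Matrix.mul_neg, Matrix.zero_mul, Matrix.one_mul,
      Matrix.neg_mul, zero_add, add_zero, neg_zero, zero_sub, sub_zero] at hmem2
    have h11 := congrArg Matrix.toBlocks₁₁ hmem2
    have h12 := congrArg Matrix.toBlocks₁₂ hmem2
    have h22 := congrArg Matrix.toBlocks₂₂ hmem2
    simp only [Matrix.toBlocks_fromBlocks₁₁, Matrix.toBlocks_fromBlocks₁₂,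
      Matrix.toBlocks_fromBlocks₂₂] at h11 h12 h22
    rw [add_neg_eq_zero] at h11 h22
    refine ⟨h11.symm, ?_, h22.symm⟩
    linear_combination (norm := abel) -h12
  -- Step 2 : complexification
  set Ac := A.map Complex.ofReal with hAcdef
  set Bc := B.map Complex.ofReal with hBcdef
  set Cc := C.map Complex.ofReal with hCcdef
  set Dc := D.map Complex.ofReal with hDcdef
  have hΓ : Γ = (Bc + Complex.I • Dc)ᵀ * ((Ac + Complex.I • Cc)ᵀ)⁻¹ := rfl
  set P := Ac + Complex.I • Cc with hPdef
  set Q := Bc + Complex.I • Dc with hQdef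
  set Pb := Ac - Complex.I • Cc with hPbdef
  set Qb := Bc - Complex.I • Dc with hQbdef
  have c1 : Ac * Bcᵀ = Bc * Acᵀ := by
    ext i j
    have h' := congrFun (congrFun e1 i) j
    simp only [Matrix.mul_apply, Matrix.transpose_apply] at h'
    simp only [hAcdef, hBcdef, Matrix.mul_apply, Matrix.transpose_apply, Matrix.map_apply]
    exact_mod_cast h'
  have c4 : Cc * Dcᵀ = Dc * Ccᵀ := by
    ext i j
    have h' := congrFun (congrFun e4 i) j
    simp only [Matrix.mul_apply, Matrix.transpose_apply] at h'
    simp only [hCcdef, hDcdef, Matrix.mul_apply, Matrix.transpose_apply, Matrix.map_apply]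
    exact_mod_cast h'
  have cAD : Ac * Dcᵀ - Bc * Ccᵀ = 1 := by
    ext i j
    have h' := congrFun (congrFun e2 i) j
    simp only [Matrix.mul_apply, Matrix.transpose_apply, Matrix.sub_apply,
      Matrix.one_apply] at h'
    simp only [hAcdef, hBcdef, hCcdef, hDcdef, Matrix.mul_apply, Matrix.transpose_apply,
      Matrix.map_apply, Matrix.sub_apply, Matrix.one_apply]
    rcases eq_or_ne i j with rfl | hij
    · simp only [if_pos rfl] at h' ⊢
      exact_mod_cast h'
    · simp only [if_neg hij] at h' ⊢
      exact_mod_cast h'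
  have hAD : Ac * Dcᵀ = 1 + Bc * Ccᵀ := sub_eq_iff_eq_add.mp cAD
  have hDA : Dc * Acᵀ = 1 + Cc * Bcᵀ := by
    have := congrArg Matrix.transpose hAD
    simpa [Matrix.transpose_mul, Matrix.transpose_add] using this
  -- Step 3 : key identities
  have S : Q * Pᵀ = P * Qᵀ := by
    rw [hPdef, hQdef]
    simp only [transpose_add, transpose_smul, add_mul, mul_add, smul_mul_assoc,
      mul_smul_comm, smul_smul, Complex.I_mul_I, neg_smul, one_smul, c1, c4, hAD, hDA]
    module
  have K : Q * Pbᵀ - P * Qbᵀ = (2 * Complex.I) • 1 := by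
    rw [hPdef, hQdef, hPbdef, hQbdef]
    simp only [transpose_add, transpose_sub, transpose_smul, add_mul, mul_add, sub_mul, mul_sub,
      smul_mul_assoc, mul_smul_comm, smul_smul, Complex.I_mul_I, neg_smul, one_smul,
      c1, c4, hAD, hDA]
    module
  -- conjugates
  have hPbmap : Pb = P.map (starRingEnd ℂ) := by
    ext i j
    simp only [hPdef, hPbdef, hAcdef, hCcdef, Matrix.map_apply, Matrix.sub_apply,
      Matrix.add_apply, Matrix.smul_apply, smul_eq_mul, _root_.map_add, _root_.map_mul,
      Complex.conj_ofReal, Complex.conj_I]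
    ring
  have hQbmap : Qb = Q.map (starRingEnd ℂ) := by
    ext i j
    simp only [hQdef, hQbdef, hBcdef, hDcdef, Matrix.map_apply, Matrix.sub_apply,
      Matrix.add_apply, Matrix.smul_apply, smul_eq_mul, _root_.map_add, _root_.map_mul,
      Complex.conj_ofReal, Complex.conj_I]
    ring
  have hPmap : Pb.map (starRingEnd ℂ) = P := by
    rw [hPbmap]
    ext i j
    simp [Matrix.map_apply]
  -- Step 4 : invertibility of Pᵀ
  have hPTdet : Pᵀ.det ≠ 0 := by
    intro h0
    obtain ⟨v, hv, hPv⟩ := (Matrix.exists_mulVec_eq_zero_iff).mpr h0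
    have h1 : Pbᵀ *ᵥ (star v) = 0 := by
      have := congrArg star hPv
      rw [star_mulVec_map] at this
      simpa [hPbmap, Matrix.transpose_map] using this
    have h2 := congrArg (fun X => X *ᵥ (star v)) K
    simp only [Matrix.sub_mulVec, ← Matrix.mulVec_mulVec, h1, Matrix.mulVec_zero,
      Matrix.smul_mulVec, Matrix.one_mulVec, zero_sub] at h2
    have h4 : v ᵥ* P = 0 := by
      rw [← Matrix.mulVec_transpose]
      exact hPv
    have h3 := congrArg (fun y => v ⬝ᵥ y) h2
    simp only [dotProduct_neg, Matrix.dotProduct_mulVec, dotProduct_smul, smul_eq_mul, h4,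
      Matrix.zero_vecMul, zero_dotProduct, neg_zero] at h3
    have h5 : v ⬝ᵥ star v = 0 := by
      have h2I : (2 * Complex.I) ≠ 0 := by simp [Complex.I_ne_zero]
      exact (mul_eq_zero.mp h3.symm).resolve_left h2I
    have h6 : ∑ i, Complex.normSq (v i) = 0 := by
      have hvv : v ⬝ᵥ star v = ((∑ i, Complex.normSq (v i) : ℝ) : ℂ) := by
        simp only [dotProduct, Pi.star_apply, RCLike.star_def, Complex.mul_conj]
        push_cast
        rfl
      rw [hvv] at h5
      exact_mod_cast h5
    apply hv
    ext i
    exact Complex.normSq_eq_zero.mp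
      ((Finset.sum_eq_zero_iff_of_nonneg (fun i _ => Complex.normSq_nonneg (v i))).mp h6 i
        (Finset.mem_univ i))
  have hPTu : IsUnit Pᵀ.det := isUnit_iff_ne_zero.mpr hPTdet
  have hPu : IsUnit P.det := by rwa [Matrix.det_transpose] at hPTu
  -- Step 5 : symmetry
  have hΓ2 : Γ = P⁻¹ * Q := by
    rw [hΓ]
    calc Qᵀ * (Pᵀ)⁻¹ = P⁻¹ * (P * Qᵀ) * (Pᵀ)⁻¹ := by
          rw [← Matrix.mul_assoc, Matrix.nonsing_inv_mul _ hPu, Matrix.one_mul]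
      _ = P⁻¹ * (Q * Pᵀ) * (Pᵀ)⁻¹ := by rw [S]
      _ = P⁻¹ * Q := by
          rw [Matrix.mul_assoc, Matrix.mul_assoc, Matrix.mul_nonsing_inv _ hPTu, Matrix.mul_one]
  have hsymm : Γᵀ = Γ := by
    rw [hΓ, Matrix.transpose_mul, Matrix.transpose_nonsing_inv, transpose_transpose,
      transpose_transpose]
    exact hΓ2.symm
  refine ⟨hsymm, ?_⟩
  -- Step 6 : positive definiteness of the imaginary part
  have hPbT : Pbᵀ = Pᵀ.map (starRingEnd ℂ) := by rw [hPbmap, Matrix.transpose_map]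
  have hPT : Pᵀ = Pbᵀ.map (starRingEnd ℂ) := by
    rw [← hPmap, Matrix.transpose_map]
  have hPbTu : IsUnit Pbᵀ.det := by
    rw [hPbT, ← RingHom.mapMatrix_apply, ← RingHom.map_det]
    apply isUnit_iff_ne_zero.mpr
    intro hz
    apply hPTdet
    have := congrArg (starRingEnd ℂ) hz
    simpa using this
  have hinvmap : (Pbᵀ)⁻¹ = ((Pᵀ)⁻¹).map (starRingEnd ℂ) := by
    apply Matrix.inv_eq_right_inv
    rw [hPbT, ← Matrix.map_mul, Matrix.mul_nonsing_inv _ hPTu,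
      Matrix.map_one _ (map_zero _) (map_one _)]
  have hinvmap2 : (Pᵀ)⁻¹ = ((Pbᵀ)⁻¹).map (starRingEnd ℂ) := by
    apply Matrix.inv_eq_right_inv
    rw [hPT, ← Matrix.map_mul, Matrix.mul_nonsing_inv _ hPbTu,
      Matrix.map_one _ (map_zero _) (map_one _)]
  have hΓconj : Γ.map (starRingEnd ℂ) = Qbᵀ * (Pbᵀ)⁻¹ := by
    rw [hΓ, Matrix.map_mul, Matrix.transpose_map, ← hQbmap, ← hinvmap]
  have hdiff : Γ - Γ.map (starRingEnd ℂ) = (2 * Complex.I) • (P⁻¹ * (Pbᵀ)⁻¹) := by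
    rw [hΓconj, hΓ2]
    have t1 : P⁻¹ * (Q * Pbᵀ) * (Pbᵀ)⁻¹ = P⁻¹ * Q := by
      rw [Matrix.mul_assoc, Matrix.mul_assoc, Matrix.mul_nonsing_inv _ hPbTu, Matrix.mul_one]
    have t2 : P⁻¹ * (P * Qbᵀ) * (Pbᵀ)⁻¹ = Qbᵀ * (Pbᵀ)⁻¹ := by
      rw [← Matrix.mul_assoc, Matrix.nonsing_inv_mul _ hPu, Matrix.one_mul]
    calc P⁻¹ * Q - Qbᵀ * (Pbᵀ)⁻¹
        = P⁻¹ * (Q * Pbᵀ) * (Pbᵀ)⁻¹ - P⁻¹ * (P * Qbᵀ) * (Pbᵀ)⁻¹ := by rw [t1, t2]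
      _ = P⁻¹ * (Q * Pbᵀ - P * Qbᵀ) * (Pbᵀ)⁻¹ := by
          rw [Matrix.mul_sub, Matrix.sub_mul]
      _ = (2 * Complex.I) • (P⁻¹ * (Pbᵀ)⁻¹) := by
          rw [K, mul_smul_comm, Matrix.mul_one, smul_mul_assoc]
  refine Matrix.PosDef.of_dotProduct_mulVec_pos ?_ ?_
  · -- Hermitian
    show (Matrix.of fun i j => (Γ i j).im)ᴴ = (Matrix.of fun i j => (Γ i j).im)
    ext i j
    simp only [Matrix.conjTranspose_apply, Matrix.of_apply, star_trivial]
    have h' := congrFun (congrFun hsymm i) j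
    rw [Matrix.transpose_apply] at h'
    rw [h']
  · -- positivity
    intro x hx
    set w : Fin d → ℂ := fun i => ((x i : ℝ) : ℂ) with hwdef
    have hw : w ≠ 0 := by
      intro h0
      apply hx
      ext i
      have h1 := congrFun h0 i
      rw [hwdef] at h1
      simp only [Pi.zero_apply] at h1 ⊢
      exact_mod_cast h1
    set u : Fin d → ℂ := (Pbᵀ)⁻¹ *ᵥ w with hudef
    have hu : u ≠ 0 := by
      intro h0
      apply hw
      have hPu' : Pbᵀ *ᵥ u = w := by
        rw [hudef, Matrix.mulVec_mulVec, Matrix.mul_nonsing_inv _ hPbTu, Matrix.one_mulVec]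
      rw [h0, Matrix.mulVec_zero] at hPu'
      exact hPu'.symm
    set z : ℂ := w ⬝ᵥ (Γ *ᵥ w) with hzdef
    have claim1 : star x ⬝ᵥ ((Matrix.of fun i j => (Γ i j).im) *ᵥ x) = z.im := by
      rw [hzdef]
      simp only [star_trivial, dotProduct, Matrix.mulVec, dotProduct, Matrix.of_apply, hwdef,
        Finset.mul_sum, Complex.im_sum]
      refine Finset.sum_congr rfl fun i _ => Finset.sum_congr rfl fun j _ => ?_
      simp only [Complex.mul_im, Complex.ofReal_re, Complex.ofReal_im, Complex.mul_re,
        mul_zero, zero_mul, add_zero, zero_add, sub_zero]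
    have hstarw : star w = w := by
      ext i
      simp [hwdef, Complex.conj_ofReal]
    have hconjz : (starRingEnd ℂ) z = w ⬝ᵥ ((Γ.map (starRingEnd ℂ)) *ᵥ w) := by
      rw [hzdef]
      simp only [dotProduct, Matrix.mulVec, dotProduct, map_sum, _root_.map_mul,
        Matrix.map_apply, hwdef, Complex.conj_ofReal]
    have hzz : z - (starRingEnd ℂ) z = (2 * Complex.I) * (star u ⬝ᵥ u) := by
      rw [hconjz]
      have hsub : z - w ⬝ᵥ (Γ.map (starRingEnd ℂ) *ᵥ w)
          = w ⬝ᵥ ((Γ - Γ.map (starRingEnd ℂ)) *ᵥ w) := by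
        rw [hzdef, Matrix.sub_mulVec, dotProduct_sub]
      rw [hsub, hdiff, Matrix.smul_mulVec, dotProduct_smul, smul_eq_mul]
      congr 1
      rw [← Matrix.mulVec_mulVec, Matrix.dotProduct_mulVec]
      have hstaru : star u = (Pᵀ)⁻¹ *ᵥ w := by
        rw [hudef, star_mulVec_map, ← hinvmap2, hstarw]
      have hvm : w ᵥ* P⁻¹ = (Pᵀ)⁻¹ *ᵥ w := by
        rw [← Matrix.mulVec_transpose, Matrix.transpose_nonsing_inv]
      rw [hvm, hstaru, hudef]
    have hr : star u ⬝ᵥ u = ((∑ i, Complex.normSq (u i) : ℝ) : ℂ) := by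
      simp only [dotProduct, Pi.star_apply, RCLike.star_def, ← Complex.normSq_eq_conj_mul_self]
      push_cast
      rfl
    obtain ⟨i0, hi0⟩ := Function.ne_iff.mp hu
    have ht : 0 < ∑ i, Complex.normSq (u i) :=
      Finset.sum_pos' (fun i _ => Complex.normSq_nonneg _)
        ⟨i0, Finset.mem_univ i0, Complex.normSq_pos.mpr (by simpa using hi0)⟩
    have him : z.im = ∑ i, Complex.normSq (u i) := by
      have h1 : z - (starRingEnd ℂ) z = ((2 * z.im : ℝ) : ℂ) * Complex.I := Complex.sub_conj z
      rw [hzz, hr] at h1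
      have h2 := congrArg Complex.im h1
      simp only [Complex.mul_im, Complex.mul_re, Complex.ofReal_re, Complex.ofReal_im,
        Complex.I_re, Complex.I_im, Complex.re_ofNat, Complex.im_ofNat] at h2
      nlinarith [h2]
    rw [claim1, him]
    exact ht
end

section
/- Let [[A,B],[C,D]] be a real symplectic matrix in d×d blocks with B invertible, let Γ := (B+iD)ᵀ(A+iC)^{−T}, and define Ỹ := Aᵀ + Dᵀ + i(Cᵀ − Bᵀ). Then Γ + iI is invertible and (Γ + iI)⁻¹ = (1/i)(A + iC)ᵀ Ỹ⁻¹. -/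
open Matrix

private lemma dot_helper {d : ℕ} (X : Matrix (Fin d) (Fin d) ℂ) (v : Fin d → ℂ) :
    star v ⬝ᵥ (Xᴴ * X).mulVec v = star (X.mulVec v) ⬝ᵥ (X.mulVec v) := by
  rw [← Matrix.mulVec_mulVec, Matrix.dotProduct_mulVec, Matrix.star_mulVec]

private lemma stmt8_aux (d : ℕ) (a b c e : Matrix (Fin d) (Fin d) ℂ)
    (ha : aᴴ = aᵀ) (hb : bᴴ = bᵀ) (hc : cᴴ = cᵀ) (he : eᴴ = eᵀ)
    (h : (fromBlocks a b c e)ᵀ * fromBlocks 0 1 (-1) 0 * fromBlocks a b c e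
       = fromBlocks 0 1 (-1) 0) :
    IsUnit (a + Complex.I • c).det ∧
      IsUnit (aᵀ + eᵀ + Complex.I • (cᵀ - bᵀ)).det := by
  open ComplexOrder in
  have hblk := h
  rw [fromBlocks_transpose, fromBlocks_multiply, fromBlocks_multiply, fromBlocks_inj] at hblk
  obtain ⟨h1, h2, h3, h4⟩ := hblk
  simp only [Matrix.mul_zero, Matrix.zero_mul, Matrix.mul_one, Matrix.one_mul,
    Matrix.mul_neg, Matrix.neg_mul, add_zero, zero_add] at h1 h2 h3 h4
  set M := fromBlocks a b c e with hM
  set J : Matrix (Fin d ⊕ Fin d) (Fin d ⊕ Fin d) ℂ := fromBlocks 0 1 (-1) 0 with hJ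
  have hJJ : J * J = -1 := by
    rw [hJ, fromBlocks_multiply]
    simp [← fromBlocks_one, fromBlocks_neg]
  have hJunit : IsUnit J.det := by
    have : J * (-J) = 1 := by rw [Matrix.mul_neg, hJJ]; simp
    exact Matrix.isUnit_det_of_right_inverse this
  have hJinv : J⁻¹ = -J := by
    apply Matrix.inv_eq_right_inv; rw [Matrix.mul_neg, hJJ]; simp
  have hMunit : IsUnit M.det := by
    have hd := congrArg Matrix.det h
    simp only [Matrix.det_mul, Matrix.det_transpose] at hd
    have h2' : (M.det * M.det - 1) * J.det = 0 := by linear_combination hd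
    rcases mul_eq_zero.1 h2' with h3' | h3'
    · exact IsUnit.of_mul_eq_one _ (by linear_combination h3')
    · exact absurd h3' hJunit.ne_zero
  have hMt : Mᵀ = J * M⁻¹ * J⁻¹ := by
    have h1' : Mᵀ * J * M * M⁻¹ = J * M⁻¹ := by rw [h]
    rw [Matrix.mul_assoc (Mᵀ * J), Matrix.mul_nonsing_inv _ hMunit, Matrix.mul_one] at h1'
    rw [← h1', Matrix.mul_assoc,
      Matrix.mul_nonsing_inv _ (by simpa using hJunit), Matrix.mul_one]
  have hsymp' : M * J * Mᵀ = J := by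
    calc M * J * Mᵀ = M * J * (J * M⁻¹ * J⁻¹) := by rw [hMt]
      _ = M * (J * J) * M⁻¹ * J⁻¹ := by noncomm_ring
      _ = J := by
          rw [hJJ, Matrix.mul_neg, Matrix.mul_one, Matrix.neg_mul,
            Matrix.mul_nonsing_inv _ hMunit, Matrix.neg_mul, Matrix.one_mul, hJinv]
          simp
  rw [hM, hJ, fromBlocks_transpose, fromBlocks_multiply, fromBlocks_multiply,
    fromBlocks_inj] at hsymp'
  obtain ⟨g1, g2, g3, g4⟩ := hsymp'
  simp only [Matrix.mul_zero, Matrix.zero_mul, Matrix.mul_one, Matrix.one_mul,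
    Matrix.mul_neg, Matrix.neg_mul, add_zero, zero_add] at g1 g2 g3 g4
  have hac : aᵀ * c = cᵀ * a := (neg_add_eq_zero.mp h1).symm
  have hea1 : eᵀ * a - bᵀ * c = 1 := by
    have := congrArg Neg.neg h3; simp only [neg_neg] at this; rw [← this]; abel
  have hae : a * eᵀ = 1 + b * cᵀ := by rw [← g2]; abel
  have hea : e * aᵀ = 1 + c * bᵀ := by
    have := congrArg Neg.neg g3; simp only [neg_neg] at this; rw [← this]; abel
  have hba : b * aᵀ = a * bᵀ := neg_add_eq_zero.mp g1
  have hec : e * cᵀ = c * eᵀ := neg_add_eq_zero.mp g4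
  constructor
  · -- W := a + I•c invertible
    rw [isUnit_iff_ne_zero]
    intro hdet
    obtain ⟨v, hv, hXv⟩ := (Matrix.exists_mulVec_eq_zero_iff).2 hdet
    have hWW : (a + Complex.I • c)ᴴ * (a + Complex.I • c) = aᵀ * a + cᵀ * c := by
      simp only [conjTranspose_add, conjTranspose_smul, ha, hc, Complex.star_def,
        Complex.conj_I, Matrix.add_mul, Matrix.mul_add, Matrix.neg_mul, smul_mul_assoc,
        mul_smul_comm, smul_add, smul_smul, Complex.I_mul_I, neg_smul, neg_neg, one_smul]
      rw [hac]
      match_scalars <;> simp [Complex.I_sq] <;> ring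
    have hdot : star (a.mulVec v) ⬝ᵥ (a.mulVec v) + star (c.mulVec v) ⬝ᵥ (c.mulVec v) = 0 := by
      calc star (a.mulVec v) ⬝ᵥ (a.mulVec v) + star (c.mulVec v) ⬝ᵥ (c.mulVec v)
          = star v ⬝ᵥ ((aᴴ * a).mulVec v) + star v ⬝ᵥ ((cᴴ * c).mulVec v) := by
            rw [dot_helper, dot_helper]
        _ = star v ⬝ᵥ ((aᴴ * a + cᴴ * c).mulVec v) := by
            rw [Matrix.add_mulVec, dotProduct_add]
        _ = star v ⬝ᵥ (((a + Complex.I • c)ᴴ * (a + Complex.I • c)).mulVec v) := by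
            rw [ha, hc, ← hWW]
        _ = 0 := by
            rw [← Matrix.mulVec_mulVec, hXv, Matrix.mulVec_zero, dotProduct_zero]
    have n1 := dotProduct_star_self_nonneg (a.mulVec v)
    have n2 := dotProduct_star_self_nonneg (c.mulVec v)
    have z1 : a.mulVec v = 0 := by
      rw [← dotProduct_star_self_eq_zero]
      refine le_antisymm ?_ n1
      have : star (a.mulVec v) ⬝ᵥ (a.mulVec v)
          = -(star (c.mulVec v) ⬝ᵥ (c.mulVec v)) := by linear_combination hdot
      rw [this]; exact neg_nonpos.2 n2
    have z2 : c.mulVec v = 0 := by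
      rw [← dotProduct_star_self_eq_zero]
      refine le_antisymm ?_ n2
      have : star (c.mulVec v) ⬝ᵥ (c.mulVec v)
          = -(star (a.mulVec v) ⬝ᵥ (a.mulVec v)) := by linear_combination hdot
      rw [this]; exact neg_nonpos.2 n1
    apply hv
    calc v = (eᵀ * a - bᵀ * c).mulVec v := by rw [hea1, Matrix.one_mulVec]
      _ = eᵀ.mulVec (a.mulVec v) - bᵀ.mulVec (c.mulVec v) := by
          rw [Matrix.sub_mulVec, Matrix.mulVec_mulVec, Matrix.mulVec_mulVec]
      _ = 0 := by rw [z1, z2, Matrix.mulVec_zero, Matrix.mulVec_zero, sub_zero]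
  · -- Ytil invertible
    rw [isUnit_iff_ne_zero]
    intro hdet
    obtain ⟨v, hv, hYv⟩ := (Matrix.exists_mulVec_eq_zero_iff).2 hdet
    set Zm : Matrix (Fin d) (Fin d) ℂ := (aᵀ - eᵀ) + Complex.I • (cᵀ + bᵀ) with hZm
    have hYH : (aᵀ + eᵀ + Complex.I • (cᵀ - bᵀ))ᴴ = (a + e) - Complex.I • (c - b) := by
      simp only [conjTranspose_add, conjTranspose_sub, conjTranspose_smul,
        Complex.star_def, Complex.conj_I, neg_smul]
      rw [show aᵀᴴ = a by rw [show aᵀᴴ = aᴴᵀ from rfl, ha, transpose_transpose],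
        show eᵀᴴ = e by rw [show eᵀᴴ = eᴴᵀ from rfl, he, transpose_transpose],
        show cᵀᴴ = c by rw [show cᵀᴴ = cᴴᵀ from rfl, hc, transpose_transpose],
        show bᵀᴴ = b by rw [show bᵀᴴ = bᴴᵀ from rfl, hb, transpose_transpose]]
      abel
    have hZH : Zmᴴ = (a - e) - Complex.I • (c + b) := by
      rw [hZm]
      simp only [conjTranspose_add, conjTranspose_sub, conjTranspose_smul,
        Complex.star_def, Complex.conj_I, neg_smul]
      rw [show aᵀᴴ = a by rw [show aᵀᴴ = aᴴᵀ from rfl, ha, transpose_transpose],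
        show eᵀᴴ = e by rw [show eᵀᴴ = eᴴᵀ from rfl, he, transpose_transpose],
        show cᵀᴴ = c by rw [show cᵀᴴ = cᴴᵀ from rfl, hc, transpose_transpose],
        show bᵀᴴ = b by rw [show bᵀᴴ = bᴴᵀ from rfl, hb, transpose_transpose]]
      abel
    have hid : ((a + e) - Complex.I • (c - b)) * (aᵀ + eᵀ + Complex.I • (cᵀ - bᵀ))
        = ((a - e) - Complex.I • (c + b)) * Zm
          + (4:ℂ) • (1 : Matrix (Fin d) (Fin d) ℂ) := by
      rw [hZm]
      simp only [Matrix.add_mul, Matrix.sub_mul, Matrix.mul_add, Matrix.mul_sub,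
        smul_mul_assoc, mul_smul_comm, smul_smul, Complex.I_mul_I, neg_smul, one_smul]
      rw [hae, hea, hba, hec]
      match_scalars <;> simp [Complex.I_sq] <;> ring
    have hY0 : (Zmᴴ * Zm).mulVec v + (4:ℂ) • v = 0 := by
      have h0 : (((aᵀ + eᵀ + Complex.I • (cᵀ - bᵀ))ᴴ
          * (aᵀ + eᵀ + Complex.I • (cᵀ - bᵀ))).mulVec v) = 0 := by
        rw [← Matrix.mulVec_mulVec, hYv, Matrix.mulVec_zero]
      rw [hYH, hid, ← hZH, Matrix.add_mulVec, Matrix.smul_mulVec,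
        Matrix.one_mulVec] at h0
      exact h0
    have hdot : star v ⬝ᵥ ((Zmᴴ * Zm).mulVec v) + (4:ℂ) * (star v ⬝ᵥ v) = 0 := by
      have := congrArg (fun w => star v ⬝ᵥ w) hY0
      simpa [dotProduct_add, dotProduct_smul, smul_eq_mul] using this
    have p1 : 0 ≤ star v ⬝ᵥ ((Zmᴴ * Zm).mulVec v) := by
      rw [dot_helper]; exact dotProduct_star_self_nonneg _
    have p2 : 0 ≤ star v ⬝ᵥ v := dotProduct_star_self_nonneg v
    have h4 : (0:ℂ) ≤ 4 := by positivity
    have hvv : star v ⬝ᵥ v = 0 := by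
      have hle : (4:ℂ) * (star v ⬝ᵥ v) ≤ 0 := by
        have : (4:ℂ) * (star v ⬝ᵥ v) = -(star v ⬝ᵥ ((Zmᴴ * Zm).mulVec v)) := by
          linear_combination hdot
        rw [this]; exact neg_nonpos.2 p1
      have hge : (0:ℂ) ≤ (4:ℂ) * (star v ⬝ᵥ v) := mul_nonneg h4 p2
      have := le_antisymm hle hge
      rcases mul_eq_zero.1 this with h' | h'
      · norm_num at h'
      · exact h'
    exact hv (dotProduct_star_self_eq_zero.1 hvv)

theorem stmt_8 (d : ℕ) (A B C D : Matrix (Fin d) (Fin d) ℝ)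
    (h : (Matrix.fromBlocks A B C D)ᵀ * Matrix.fromBlocks 0 1 (-1) 0 *
        Matrix.fromBlocks A B C D = Matrix.fromBlocks 0 1 (-1) 0)
    (hB : IsUnit B) :
    let Γ : Matrix (Fin d) (Fin d) ℂ :=
      (B.map Complex.ofReal + Complex.I • D.map Complex.ofReal)ᵀ *
        ((A.map Complex.ofReal + Complex.I • C.map Complex.ofReal)ᵀ)⁻¹
    let Ytil : Matrix (Fin d) (Fin d) ℂ :=
      (A.map Complex.ofReal)ᵀ + (D.map Complex.ofReal)ᵀ +
        Complex.I • ((C.map Complex.ofReal)ᵀ - (B.map Complex.ofReal)ᵀ)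
    IsUnit (Γ + Complex.I • (1 : Matrix (Fin d) (Fin d) ℂ)) ∧
    (Γ + Complex.I • (1 : Matrix (Fin d) (Fin d) ℂ))⁻¹ =
      Complex.I⁻¹ • ((A.map Complex.ofReal + Complex.I • C.map Complex.ofReal)ᵀ * Ytil⁻¹) := by
  intro Γ Ytil
  have hG : Γ = (B.map Complex.ofReal + Complex.I • D.map Complex.ofReal)ᵀ *
      ((A.map Complex.ofReal + Complex.I • C.map Complex.ofReal)ᵀ)⁻¹ := rfl
  have hY : Ytil = (A.map Complex.ofReal)ᵀ + (D.map Complex.ofReal)ᵀ +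
      Complex.I • ((C.map Complex.ofReal)ᵀ - (B.map Complex.ofReal)ᵀ) := rfl
  clear_value Γ Ytil
  subst hG hY
  have hmap : ∀ X : Matrix (Fin d) (Fin d) ℝ,
      (X.map Complex.ofReal)ᴴ = (X.map Complex.ofReal)ᵀ := by
    intro X; ext i j; simp [conjTranspose_apply, Complex.conj_ofReal]
  have hJm : (fromBlocks 0 1 (-1) 0 : Matrix (Fin d ⊕ Fin d) (Fin d ⊕ Fin d) ℝ).map
      (Complex.ofRealHom : ℝ →+* ℂ)
      = (fromBlocks 0 1 (-1) 0 : Matrix (Fin d ⊕ Fin d) (Fin d ⊕ Fin d) ℂ) := by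
    ext i j
    cases i <;> cases j <;>
      simp [Matrix.fromBlocks, Matrix.map_apply, Matrix.one_apply, apply_ite]
  have hmapHom : ∀ X : Matrix (Fin d) (Fin d) ℝ,
      X.map (Complex.ofRealHom : ℝ →+* ℂ) = X.map Complex.ofReal := fun _ => rfl
  have hC : (fromBlocks (A.map Complex.ofReal) (B.map Complex.ofReal)
        (C.map Complex.ofReal) (D.map Complex.ofReal))ᵀ *
      fromBlocks 0 1 (-1) 0 *
      fromBlocks (A.map Complex.ofReal) (B.map Complex.ofReal)
        (C.map Complex.ofReal) (D.map Complex.ofReal) = fromBlocks 0 1 (-1) 0 := by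
    have hmm := congrArg (fun M => M.map (Complex.ofRealHom : ℝ →+* ℂ)) h
    simp only [Matrix.map_mul, Matrix.transpose_map, hJm, Matrix.fromBlocks_map,
      hmapHom] at hmm
    exact hmm
  obtain ⟨hWdet, hYdet⟩ := stmt8_aux d (A.map Complex.ofReal) (B.map Complex.ofReal)
    (C.map Complex.ofReal) (D.map Complex.ofReal) (hmap A) (hmap B) (hmap C) (hmap D) hC
  set Wt : Matrix (Fin d) (Fin d) ℂ :=
    (A.map Complex.ofReal + Complex.I • C.map Complex.ofReal)ᵀ with hWtdef
  have hWt : IsUnit Wt.det := by rw [hWtdef, Matrix.det_transpose]; exact hWdet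
  have hYt : IsUnit ((A.map Complex.ofReal)ᵀ + (D.map Complex.ofReal)ᵀ +
      Complex.I • ((C.map Complex.ofReal)ᵀ - (B.map Complex.ofReal)ᵀ)).det := hYdet
  have hfact : Complex.I • ((A.map Complex.ofReal)ᵀ + (D.map Complex.ofReal)ᵀ +
        Complex.I • ((C.map Complex.ofReal)ᵀ - (B.map Complex.ofReal)ᵀ))
      = (B.map Complex.ofReal + Complex.I • D.map Complex.ofReal)ᵀ + Complex.I • Wt := by
    rw [hWtdef]
    simp only [transpose_add, transpose_smul, smul_add, smul_sub, smul_smul,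
      Complex.I_mul_I, neg_smul, one_smul]
    match_scalars <;> simp [Complex.I_sq] <;> ring
  have key : (B.map Complex.ofReal + Complex.I • D.map Complex.ofReal)ᵀ * Wt⁻¹ +
        Complex.I • (1 : Matrix (Fin d) (Fin d) ℂ)
      = Complex.I • (((A.map Complex.ofReal)ᵀ + (D.map Complex.ofReal)ᵀ +
          Complex.I • ((C.map Complex.ofReal)ᵀ - (B.map Complex.ofReal)ᵀ)) * Wt⁻¹) := by
    rw [← smul_mul_assoc, hfact, Matrix.add_mul, smul_mul_assoc,
      Matrix.mul_nonsing_inv _ hWt]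
  have hprod : ((B.map Complex.ofReal + Complex.I • D.map Complex.ofReal)ᵀ * Wt⁻¹ +
        Complex.I • (1 : Matrix (Fin d) (Fin d) ℂ)) *
      (Complex.I⁻¹ • (Wt * ((A.map Complex.ofReal)ᵀ + (D.map Complex.ofReal)ᵀ +
          Complex.I • ((C.map Complex.ofReal)ᵀ - (B.map Complex.ofReal)ᵀ))⁻¹)) = 1 := by
    rw [key, smul_mul_assoc, mul_smul_comm, smul_smul,
      mul_inv_cancel₀ Complex.I_ne_zero, one_smul, Matrix.mul_assoc,
      ← Matrix.mul_assoc Wt⁻¹ Wt, Matrix.nonsing_inv_mul _ hWt, Matrix.one_mul,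
      Matrix.mul_nonsing_inv _ hYt]
  exact ⟨(Matrix.isUnit_iff_isUnit_det _).2 (Matrix.isUnit_det_of_right_inverse hprod),
    Matrix.inv_eq_right_inv hprod⟩
end

section
/- Consider the (2d)×(2d) complex block matrix E = [[(A+iC)ᵀA + I, (A+iC)ᵀB], [(B+iD)ᵀA − iI, (B+iD)ᵀB]], where [[A,B],[C,D]] is a real symplectic matrix in d×d blocks. Then det E = det(−M)·det(B), where M := C − B − i(A + D). -/
open Matrix

theorem stmt_9 (d : ℕ) (A B C D : Matrix (Fin d) (Fin d) ℝ)
    (h : (Matrix.fromBlocks A B C D)ᵀ * Matrix.fromBlocks 0 1 (-1) 0 *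
        Matrix.fromBlocks A B C D = Matrix.fromBlocks 0 1 (-1) 0) :
    let A' : Matrix (Fin d) (Fin d) ℂ := A.map Complex.ofReal
    let B' : Matrix (Fin d) (Fin d) ℂ := B.map Complex.ofReal
    let C' : Matrix (Fin d) (Fin d) ℂ := C.map Complex.ofReal
    let D' : Matrix (Fin d) (Fin d) ℂ := D.map Complex.ofReal
    let E : Matrix (Fin d ⊕ Fin d) (Fin d ⊕ Fin d) ℂ :=
      Matrix.fromBlocks ((A' + Complex.I • C')ᵀ * A' + 1) ((A' + Complex.I • C')ᵀ * B')
        ((B' + Complex.I • D')ᵀ * A' - Complex.I • 1) ((B' + Complex.I • D')ᵀ * B')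
    let M : Matrix (Fin d) (Fin d) ℂ := C' - B' - Complex.I • (A' + D')
    E.det = (-M).det * B'.det := by
  intro A' B' C' D' E M
  set P := A' + Complex.I • C' with hP
  set Q := B' + Complex.I • D' with hQ
  have hE : E = Matrix.fromBlocks 1 Pᵀ (-(Complex.I • 1)) Qᵀ *
      Matrix.fromBlocks 1 0 A' B' := by
    rw [Matrix.fromBlocks_multiply]
    show Matrix.fromBlocks (Pᵀ * A' + 1) (Pᵀ * B') (Qᵀ * A' - Complex.I • 1) (Qᵀ * B') = _
    congr 1 <;> simp [sub_eq_add_neg, add_comm]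
  have hM : (-M)ᵀ = Qᵀ - -(Complex.I • 1) * Pᵀ := by
    have h1 : -M = Q + Complex.I • P := by
      simp only [M, hP, hQ, smul_add, smul_smul, Complex.I_mul_I, neg_one_smul]
      abel
    rw [h1, Matrix.transpose_add, Matrix.transpose_smul, neg_mul, Matrix.smul_mul,
      Matrix.one_mul, sub_neg_eq_add]
  rw [hE, Matrix.det_mul, Matrix.det_fromBlocks_one₁₁, Matrix.det_fromBlocks_one₁₁,
    Matrix.mul_zero, sub_zero, ← hM, Matrix.det_transpose]
end
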